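/- arXiv:1710.05785 — 2 statements merged into one kernel-verified Lean document; each statement's English description precedes it below -/
import Mathlib

section
/- Let (M, ⊕) be a commutative semigroup and for each pair (i,j) let g_{i,j} : M → M satisfy g_{i,j}(x ⊕ y) = g_{i,j}(x) ⊕ g_{i,j}(y). Suppose the synchronous iteration on n vertices is v_j^k = g_{1,j}(v_1^{k-1}) ⊕ ... ⊕ g_{n,j}(v_n^{k-1}) ⊕ c_j, and define the delta iteration by v_j^k = v_j^{k-1} ⊕ Δv_j^k and Δv_j^{k+1} = ⊕_{i=1}^n g_{i,j}(Δv_i^k), with initial values satisfying v_j^1 = v_j^0 ⊕ Δv_j^1 = g_{1,j}(v_1^0) ⊕ ... ⊕ g_{n,j}(v_n^0) ⊕ c_j. Then for all k ≥ 1, the state v_j^k produced by the delta iteration equals the state produced by the original synchronous iteration. -/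
/-- `⊕`-accumulation of `f 0, f 1, …, f m` for a binary operation `op`
(`n = m + 1` vertices, so the accumulation is over a nonempty index set). -/
def daicAccum {M : Type*} (op : M → M → M) {m : ℕ} (f : Fin (m + 1) → M) : M :=
  (List.ofFn fun i : Fin m => f i.succ).foldl op (f 0)

section aux

variable {M : Type*} (op : M → M → M)

lemma daic_med (hcomm : ∀ x y : M, op x y = op y x)
    (hassoc : ∀ x y z : M, op (op x y) z = op x (op y z)) (x y z w : M) : op (op x y) (op z w) = op (op x z) (op y w) := by
  rw [hassoc, ← hassoc y z w, hcomm y z, hassoc, ← hassoc]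

lemma daic_foldl (hcomm : ∀ x y : M, op x y = op y x)
    (hassoc : ∀ x y z : M, op (op x y) z = op x (op y z)) (l : List (M × M)) : ∀ x y : M,
    (l.map fun p => op p.1 p.2).foldl op (op x y)
      = op ((l.map Prod.fst).foldl op x) ((l.map Prod.snd).foldl op y) := by
  induction l with
  | nil => intro x y; simp
  | cons p t ih =>
      intro x y
      simp only [List.map_cons, List.foldl_cons]
      rw [daic_med op hcomm hassoc, ih]

lemma daicAccum_op (hcomm : ∀ x y : M, op x y = op y x)
    (hassoc : ∀ x y z : M, op (op x y) z = op x (op y z)) {m : ℕ} (a b : Fin (m + 1) → M) :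
    daicAccum op (fun i => op (a i) (b i)) = op (daicAccum op a) (daicAccum op b) := by
  have := daic_foldl op hcomm hassoc
    (List.ofFn fun i : Fin m => (a i.succ, b i.succ)) (a 0) (b 0)
  simpa [daicAccum, List.map_ofFn, Function.comp_def] using this

end aux

/-- If `(M, ⊕)` is a commutative semigroup, each `g i j` distributes over
`⊕`, `u` is the synchronous iteration `u_j^k = ⊕_i g i j (u_i^{k-1}) ⊕ c_j`, and `(v, Δv)` is
the delta iteration with matching initialization, then for all `k ≥ 1` the delta iteration
state equals the synchronous state. -/
theorem daic_eq_sync {M : Type*} (op : M → M → M)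
    (hcomm : ∀ x y : M, op x y = op y x)
    (hassoc : ∀ x y z : M, op (op x y) z = op x (op y z))
    {m : ℕ} (g : Fin (m + 1) → Fin (m + 1) → M → M)
    (hdist : ∀ i j x y, g i j (op x y) = op (g i j x) (g i j y))
    (c : Fin (m + 1) → M)
    (u v Δv : ℕ → Fin (m + 1) → M)
    (hu : ∀ k j, u (k + 1) j = op (daicAccum op fun i => g i j (u k i)) (c j))
    (hu0 : ∀ j, u 0 j = v 0 j)
    (hv : ∀ k j, v (k + 1) j = op (v k j) (Δv (k + 1) j))
    (hΔ : ∀ k, 1 ≤ k → ∀ j, Δv (k + 1) j = daicAccum op fun i => g i j (Δv k i))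
    (hinit : ∀ j, op (v 0 j) (Δv 1 j) = op (daicAccum op fun i => g i j (v 0 i)) (c j)) :
    ∀ k, 1 ≤ k → ∀ j, v k j = u k j := by
  have rearr : ∀ x y z : M, op (op x y) z = op (op x z) y := by
    intro x y z; rw [hassoc, hcomm y z, ← hassoc]
  -- strengthened induction
  have main : ∀ k, 1 ≤ k → (∀ j, v k j = u k j) ∧
      (∀ j, u (k + 1) j = op (u k j) (Δv (k + 1) j)) := by
    intro k hk
    induction k with
    | zero => omega
    | succ k ih =>
      rcases Nat.eq_zero_or_pos k with rfl | hk1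
      · constructor
        · intro j
          rw [hv 0 j, hinit j, hu 0 j]
          congr 1
          exact congrArg _ (funext fun i => congrArg _ (by rw [hu0]))
        · intro j
          rw [hu 1 j, hΔ 1 le_rfl j]
          have h1 : ∀ i, u 1 i = op (v 0 i) (Δv 1 i) := by
            intro i
            rw [← hv 0 i, hv 0 i, hinit i, hu 0 i]
            congr 1
            exact congrArg _ (funext fun i' => congrArg _ (by rw [hu0]))
          have : (fun i => g i j (u 1 i)) =
              fun i => op (g i j (v 0 i)) (g i j (Δv 1 i)) := by
            funext i; rw [h1 i, hdist]
          rw [this, daicAccum_op op hcomm hassoc, rearr]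
          congr 1
          rw [hu 0 j]
          congr 1
          exact congrArg _ (funext fun i => congrArg _ (by rw [hu0]))
      · obtain ⟨hvk, huk⟩ := ih hk1
        have hvk1 : ∀ j, v (k + 1) j = u (k + 1) j := by
          intro j; rw [hv k j, hvk j, ← huk j]
        refine ⟨hvk1, fun j => ?_⟩
        rw [hu (k + 1) j, hΔ (k + 1) (by omega) j]
        have : (fun i => g i j (u (k + 1) i)) =
            fun i => op (g i j (u k i)) (g i j (Δv (k + 1) i)) := by
          funext i; rw [← hvk1 i, hv k i, hvk i, hdist]
        rw [this, daicAccum_op op hcomm hassoc, rearr, ← hu k j]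
  exact fun k hk => (main k hk).1
end

section
/- Under synchronous delta-based accumulative iteration (v_j^k = v_j^{k-1} ⊕ Δv_j^k, Δv_j^{k+1} = ⊕_i g_{i,j}(Δv_i^k)), the state after k iterations admits the closed form v_j^k = v_j^0 ⊕ Δv_j^1 ⊕ ⊕_{l=1}^{k-1} ⊕_{(i_0,...,i_{l-1}) ∈ [n]^l} g_{i_{l-1},j}(g_{i_{l-2},i_{l-1}}(... g_{i_0,i_1}(Δv_{i_0}^1)...)), i.e., v_j^k is the accumulation of the initial deltas propagated along all paths of length at most k-1 ending at j. -/
/-- The value delivered to vertex `j` along the path `i_0 → i_1 → ⋯ → i_{l-1} → j`,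
where the path is recorded as the list `[i_{l-1}, …, i_1, i_0]` (nearest hop first):
`g i_{l-1} j (g i_{l-2} i_{l-1} (⋯ (g i_0 i_1 (x i_0))))`; the empty path at `j` yields `x j`. -/
def pathVal {M : Type*} {n : ℕ} (g : Fin n → Fin n → M → M) (x : Fin n → M) :
    List (Fin n) → Fin n → M
  | [], j => x j
  | i :: p, j => g i j (pathVal g x p i)

/-- All tuples `(i_0, …, i_{l-1}) ∈ (Fin n)^l`, encoded as lists of length `l`. -/
def tuplesOfLen (n : ℕ) : ℕ → List (List (Fin n))
  | 0 => [[]]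
  | l + 1 => (tuplesOfLen n l).flatMap fun p => (List.finRange n).map fun i => i :: p

/-- All paths of length `1, 2, …, K` (tuples in `(Fin n)^l` for `1 ≤ l ≤ K`). -/
def allPathsUpTo (n K : ℕ) : List (List (Fin n)) :=
  (List.range K).flatMap fun l => tuplesOfLen n (l + 1)

section Aux

variable {M : Type*} [CommSemigroup M]

lemma daic_coe_foldl (l : List M) (a : M) :
    ((l.foldl (· * ·) a : M) : WithOne M) = ↑a * (l.map (fun x : M => (x : WithOne M))).prod := by
  induction l generalizing a with
  | nil => simp
  | cons x t ih => simp [ih, mul_assoc]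

lemma daic_swap {α β : Type*} (l1 : List α) (l2 : List β) (F : α → β → WithOne M) :
    (l1.map fun a => (l2.map fun b => F a b).prod).prod
      = (l2.map fun b => (l1.map fun a => F a b).prod).prod := by
  induction l1 with
  | nil => simp
  | cons a t ih => simp [List.prod_map_mul, ih]

end Aux

/-- Under synchronous DAIC (`v_j^k = v_j^{k-1} ⊕ Δv_j^k`,
`Δv_j^{k+1} = ⊕_i g i j (Δv_i^k)`), the state after `k ≥ 1` iterations is the accumulation of
`v_j^0 ⊕ Δv_j^1` together with the initial deltas propagated along all paths of length at
most `k - 1` ending at `j`. -/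
theorem daic_closed_form {M : Type*} (op : M → M → M)
    (hcomm : ∀ x y : M, op x y = op y x)
    (hassoc : ∀ x y z : M, op (op x y) z = op x (op y z))
    {m : ℕ} (g : Fin (m + 1) → Fin (m + 1) → M → M)
    (hdist : ∀ i j x y, g i j (op x y) = op (g i j x) (g i j y))
    (v Δv : ℕ → Fin (m + 1) → M)
    (hv : ∀ k j, v (k + 1) j = op (v k j) (Δv (k + 1) j))
    (hΔ : ∀ k, 1 ≤ k → ∀ j, Δv (k + 1) j = daicAccum op fun i => g i j (Δv k i)) :
    ∀ k, 1 ≤ k → ∀ j,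
      v k j =
        ((allPathsUpTo (m + 1) (k - 1)).map fun p => pathVal g (Δv 1) p j).foldl op
          (op (v 0 j) (Δv 1 j)) := by
  letI : Mul M := ⟨op⟩
  letI : Semigroup M := ⟨hassoc⟩
  letI : CommSemigroup M := ⟨hcomm⟩
  have hop : op = (· * ·) := rfl
  have hmul : ∀ x y : M, op x y = x * y := fun _ _ => rfl
  -- the maps `g i j` as multiplicative homomorphisms
  let ghom : Fin (m + 1) → Fin (m + 1) → (M →ₙ* M) :=
    fun i j => ⟨g i j, fun x y => by exact hdist i j x y⟩
  -- closed form for the deltas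
  have claimB : ∀ k j, (↑(Δv (k + 1) j) : WithOne M)
      = ((tuplesOfLen (m + 1) k).map fun p => (↑(pathVal g (Δv 1) p j) : WithOne M)).prod := by
    intro k
    induction k with
    | zero => intro j; simp [tuplesOfLen, pathVal]
    | succ k ih =>
      intro j
      rw [hΔ (k + 1) (Nat.le_add_left 1 k) j]
      have hda : (daicAccum op fun i => g i j (Δv (k + 1) i))
          = (List.ofFn fun i : Fin m => g i.succ j (Δv (k + 1) i.succ)).foldl (· * ·)
              (g 0 j (Δv (k + 1) 0)) := rfl
      have key : ∀ i : Fin (m + 1), (↑(g i j (Δv (k + 1) i)) : WithOne M)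
          = ((tuplesOfLen (m + 1) k).map fun p =>
              (↑(pathVal g (Δv 1) (i :: p) j) : WithOne M)).prod := by
        intro i
        have h1 : (↑(g i j (Δv (k + 1) i)) : WithOne M)
            = WithOne.mapMulHom (ghom i j) ↑(Δv (k + 1) i) := by
          rw [WithOne.mapMulHom_coe]
          rfl
        rw [h1, ih i, map_list_prod, List.map_map]
        congr 1
      rw [hda, daic_coe_foldl]
      have h2 : (↑(g 0 j (Δv (k + 1) 0)) : WithOne M)
            * ((List.ofFn fun i : Fin m => g i.succ j (Δv (k + 1) i.succ)).map
                (fun x : M => (↑x : WithOne M))).prod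
          = (List.ofFn fun i : Fin (m + 1) => (↑(g i j (Δv (k + 1) i)) : WithOne M)).prod := by
        rw [List.ofFn_succ]
        simp [List.map_ofFn, Function.comp_def]
      rw [h2]
      have h3 : (List.ofFn fun i : Fin (m + 1) => (↑(g i j (Δv (k + 1) i)) : WithOne M)).prod
          = ((List.finRange (m + 1)).map fun i =>
              ((tuplesOfLen (m + 1) k).map fun p =>
                (↑(pathVal g (Δv 1) (i :: p) j) : WithOne M)).prod).prod := by
        rw [List.ofFn_eq_map]
        congr 1
        exact List.map_congr_left fun i _ => key i
      rw [h3, daic_swap]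
      show _ = ((tuplesOfLen (m + 1) (k + 1)).map fun p =>
          (↑(pathVal g (Δv 1) p j) : WithOne M)).prod
      rw [show tuplesOfLen (m + 1) (k + 1)
            = (tuplesOfLen (m + 1) k).flatMap
                (fun p => (List.finRange (m + 1)).map fun i => i :: p)
          from rfl]
      rw [List.flatMap, List.map_flatten, List.prod_flatten, List.map_map, List.map_map]
      congr 1
      apply List.map_congr_left
      intro p _
      simp [List.map_map, Function.comp_def]
  -- closed form for the states, in `WithOne M`
  have main : ∀ k' j, (↑(v (k' + 1) j) : WithOne M)
      = ↑(op (v 0 j) (Δv 1 j))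
        * ((allPathsUpTo (m + 1) k').map fun p =>
            (↑(pathVal g (Δv 1) p j) : WithOne M)).prod := by
    intro k'
    induction k' with
    | zero =>
      intro j
      simp [allPathsUpTo]
      exact hv 0 j
    | succ k' ih =>
      intro j
      rw [hv (k' + 1) j, hmul, WithOne.coe_mul, ih j, claimB (k' + 1) j]
      have hsplit : allPathsUpTo (m + 1) (k' + 1)
          = allPathsUpTo (m + 1) k' ++ tuplesOfLen (m + 1) (k' + 1) := by
        unfold allPathsUpTo
        rw [List.range_succ, List.flatMap_append]
        simp
      rw [hsplit, List.map_append, List.prod_append, mul_assoc]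
  intro k hk j
  obtain ⟨k', rfl⟩ : ∃ k', k = k' + 1 := ⟨k - 1, (Nat.succ_pred_eq_of_pos hk).symm⟩
  have := main k' j
  apply WithOne.coe_inj.mp
  rw [Nat.add_sub_cancel, hop, daic_coe_foldl, List.map_map]
  exact this
end
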